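/- Leave-one-out lemma for linear smoothers with two data channels: fix i, and suppose f̂^{(−i)} minimizes the V-spline objective with the i-th position and velocity terms deleted. Define y* by y*_j = y_j for j ≠ i and y*_i = f̂^{(−i)}(t_i), and v* by v*_j = v_j for j ≠ i and v*_i = f̂'^{(−i)}(t_i). Then f̂^{(−i)} is also the minimizer of the full V-spline objective with data (y*, v*); consequently its fitted values satisfy f̂^{(−i)} = S y* + γ T v* and f̂'^{(−i)} = U y* + γ V v*. -/
import Mathlib


open intervalIntegral Matrix

theorem leave_one_out_lemma
    (n : ℕ) (hn : 1 ≤ n) (a b : ℝ) (t : Fin n → ℝ)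
    (y v : Fin n → ℝ) (γ : ℝ) (hγ : 0 < γ)
    (lam : ℝ → ℝ) (hlam : ∀ s, 0 < lam s)
    (i : Fin n)
    (J : (Fin n → ℝ) → (Fin n → ℝ) → (ℝ → ℝ) → ℝ)
    (hJ : ∀ Y V f, J Y V f =
      (1/(n:ℝ)) * ∑ j, (Y j - f (t j))^2
      + (γ/(n:ℝ)) * ∑ j, (V j - deriv f (t j))^2
      + ∫ s in a..b, lam s * (deriv (deriv f) s)^2)
    (Jdel : (ℝ → ℝ) → ℝ)
    (hJdel : ∀ f, Jdel f =
      (1/(n:ℝ)) * ∑ j ∈ Finset.univ.erase i, (y j - f (t j))^2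
      + (γ/(n:ℝ)) * ∑ j ∈ Finset.univ.erase i, (v j - deriv f (t j))^2
      + ∫ s in a..b, lam s * (deriv (deriv f) s)^2)
    (fhat : ℝ → ℝ)
    (hmin : ∀ g : ℝ → ℝ, Jdel fhat ≤ Jdel g)
    (ystar vstar : Fin n → ℝ)
    (hystar : ∀ j, ystar j = if j = i then fhat (t i) else y j)
    (hvstar : ∀ j, vstar j = if j = i then deriv fhat (t i) else v j)
    (Sm Tm Um Vm : Matrix (Fin n) (Fin n) ℝ)
    (hsmoother : ∀ (Y V : Fin n → ℝ) (g : ℝ → ℝ),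
      (∀ g' : ℝ → ℝ, J Y V g ≤ J Y V g') →
      (∀ j, g (t j) = (Sm *ᵥ Y + γ • (Tm *ᵥ V)) j) ∧
      (∀ j, deriv g (t j) = (Um *ᵥ Y + γ • (Vm *ᵥ V)) j)) :
    (∀ g : ℝ → ℝ, J ystar vstar fhat ≤ J ystar vstar g) ∧
    (∀ j, fhat (t j) = (Sm *ᵥ ystar + γ • (Tm *ᵥ vstar)) j) ∧
    (∀ j, deriv fhat (t j) = (Um *ᵥ ystar + γ • (Vm *ᵥ vstar)) j) := by
  have hn0 : (0:ℝ) < (n:ℝ) := by exact_mod_cast hn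
  have key : ∀ g : ℝ → ℝ, J ystar vstar g = Jdel g
      + (1/(n:ℝ)) * (fhat (t i) - g (t i))^2
      + (γ/(n:ℝ)) * (deriv fhat (t i) - deriv g (t i))^2 := by
    intro g
    rw [hJ, hJdel]
    have h1 : ∑ j, (ystar j - g (t j))^2 =
        (fhat (t i) - g (t i))^2 + ∑ j ∈ Finset.univ.erase i, (y j - g (t j))^2 := by
      rw [← Finset.add_sum_erase Finset.univ _ (Finset.mem_univ i)]
      congr 1
      · rw [hystar i, if_pos rfl]
      · exact Finset.sum_congr rfl fun j hj => by
          rw [hystar j, if_neg (Finset.ne_of_mem_erase hj)]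
    have h2 : ∑ j, (vstar j - deriv g (t j))^2 =
        (deriv fhat (t i) - deriv g (t i))^2
          + ∑ j ∈ Finset.univ.erase i, (v j - deriv g (t j))^2 := by
      rw [← Finset.add_sum_erase Finset.univ _ (Finset.mem_univ i)]
      congr 1
      · rw [hvstar i, if_pos rfl]
      · exact Finset.sum_congr rfl fun j hj => by
          rw [hvstar j, if_neg (Finset.ne_of_mem_erase hj)]
    rw [h1, h2]; ring
  have hfull : ∀ g : ℝ → ℝ, J ystar vstar fhat ≤ J ystar vstar g := by
    intro g
    rw [key, key]
    have hJf : Jdel fhat ≤ Jdel g := hmin g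
    have e1 : (fhat (t i) - fhat (t i))^2 = 0 := by ring
    have e2 : (deriv fhat (t i) - deriv fhat (t i))^2 = 0 := by ring
    rw [e1, e2]
    have p1 : 0 ≤ (1/(n:ℝ)) * (fhat (t i) - g (t i))^2 :=
      mul_nonneg (by positivity) (sq_nonneg _)
    have p2 : 0 ≤ (γ/(n:ℝ)) * (deriv fhat (t i) - deriv g (t i))^2 :=
      mul_nonneg (by positivity) (sq_nonneg _)
    nlinarith
  obtain ⟨hpos, hvel⟩ := hsmoother ystar vstar fhat hfull
  exact ⟨hfull, hpos, hvel⟩
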